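/- Define det_qM(λ) = a(λ+η/2)d(λ−η/2), det_qK±(λ) = ±2(λ±η)(λ²/ζ̄±² − 1), and det_qU±(λ) = det_qM(λ)·det_qM(−λ)·det_qK±(λ). Then, for both choices of sign and for all λ ∈ ℂ with λ ≠ ±η/2, one has the identity det_qK±(λ)·det_qU∓(λ)/(η²−4λ²) = A_{ζ̄₊,ζ̄₋}(λ+η/2)·A_{ζ̄₊,ζ̄₋}(−λ+η/2). -/

import Mathlib

open Matrix Complex BigOperators Finset

noncomputable section

namespace XXXChain

def afun {N : ℕ} (η : ℂ) (ξ : Fin N → ℂ) (lam : ℂ) : ℂ := ∏ n, (lam - ξ n + η/2)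
def dfun {N : ℕ} (η : ℂ) (ξ : Fin N → ℂ) (lam : ℂ) : ℂ := ∏ n, (lam - ξ n - η/2)

/-- The function A_{ζ̄₊,ζ̄₋}(λ). -/
def Afun {N : ℕ} (η : ℂ) (ξ : Fin N → ℂ) (ζbp ζbm : ℂ) (lam : ℂ) : ℂ :=
  (-1)^N * ((2*lam + η)/(2*lam)) *
    ((lam - η/2 + ζbp) * (lam - η/2 + ζbm) / (ζbp * ζbm)) * afun η ξ lam * dfun η ξ (-lam)

/-- Bulk quantum determinant det_q M(λ) = a(λ+η/2) d(λ−η/2). -/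
def detqM {N : ℕ} (η : ℂ) (ξ : Fin N → ℂ) (lam : ℂ) : ℂ :=
  afun η ξ (lam + η/2) * dfun η ξ (lam - η/2)

/-- det_q K₊(λ) = 2(λ+η)(λ²/ζ̄₊² − 1). -/
def detqKp (η ζbp lam : ℂ) : ℂ := 2 * (lam + η) * (lam^2 / ζbp^2 - 1)

/-- det_q K₋(λ) = −2(λ−η)(λ²/ζ̄₋² − 1). -/
def detqKm (η ζbm lam : ℂ) : ℂ := -(2 * (lam - η) * (lam^2 / ζbm^2 - 1))

/-- det_q U₊(λ) = det_qM(λ) det_qM(−λ) det_qK₊(λ). -/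
def detqUp {N : ℕ} (η : ℂ) (ξ : Fin N → ℂ) (ζbp lam : ℂ) : ℂ :=
  detqM η ξ lam * detqM η ξ (-lam) * detqKp η ζbp lam

/-- det_q U₋(λ) = det_qM(λ) det_qM(−λ) det_qK₋(λ). -/
def detqUm {N : ℕ} (η : ℂ) (ξ : Fin N → ℂ) (ζbm lam : ℂ) : ℂ :=
  detqM η ξ lam * detqM η ξ (-lam) * detqKm η ζbm lam

set_option maxHeartbeats 1000000 in
/-- for both choices of sign and all λ ≠ ±η/2,
det_qK±(λ)·det_qU∓(λ)/(η²−4λ²) = A_{ζ̄₊,ζ̄₋}(λ+η/2)·A_{ζ̄₊,ζ̄₋}(−λ+η/2). -/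
theorem quantum_determinant_identity (N : ℕ) (hN : 1 ≤ N) (η : ℂ) (hη : η ≠ 0)
    (ξ : Fin N → ℂ) (ζbp ζbm : ℂ) (hζbp : ζbp ≠ 0) (hζbm : ζbm ≠ 0)
    (lam : ℂ) (h1 : lam ≠ η/2) (h2 : lam ≠ -(η/2)) :
    detqKp η ζbp lam * detqUm η ξ ζbm lam / (η^2 - 4*lam^2) =
      Afun η ξ ζbp ζbm (lam + η/2) * Afun η ξ ζbp ζbm (-lam + η/2) ∧
    detqKm η ζbm lam * detqUp η ξ ζbp lam / (η^2 - 4*lam^2) =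
      Afun η ξ ζbp ζbm (lam + η/2) * Afun η ξ ζbp ζbm (-lam + η/2) := by
  have hA : afun η ξ (lam + η/2) = ∏ n, (lam - ξ n + η) := by
    unfold afun; exact Finset.prod_congr rfl (fun n _ => by ring)
  have hB : dfun η ξ (lam - η/2) = ∏ n, (lam - ξ n - η) := by
    unfold dfun; exact Finset.prod_congr rfl (fun n _ => by ring)
  have hB' : dfun η ξ (-(-lam + η/2)) = ∏ n, (lam - ξ n - η) := by
    unfold dfun; exact Finset.prod_congr rfl (fun n _ => by ring)
  have hC : afun η ξ (-lam + η/2) = ∏ n, (-lam - ξ n + η) := by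
    unfold afun; exact Finset.prod_congr rfl (fun n _ => by ring)
  have hD : dfun η ξ (-lam - η/2) = ∏ n, (-lam - ξ n - η) := by
    unfold dfun; exact Finset.prod_congr rfl (fun n _ => by ring)
  have hD' : dfun η ξ (-(lam + η/2)) = ∏ n, (-lam - ξ n - η) := by
    unfold dfun; exact Finset.prod_congr rfl (fun n _ => by ring)
  have hsq : ((-1 : ℂ)^N) * ((-1 : ℂ)^N) = 1 := by
    rw [← pow_add, ← two_mul, pow_mul]; norm_num
  have hd1 : (2*lam + η) ≠ 0 := by
    intro h; apply h2; field_simp; linear_combination h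
  have hd2 : (2*(-lam) + η) ≠ 0 := by
    intro h; apply h1; field_simp; linear_combination -h
  have hd3 : (2*(lam + η/2)) ≠ 0 := by
    intro h; apply h2; linear_combination h/2
  have hd4 : (2*(-lam + η/2)) ≠ 0 := by
    intro h; apply h1; linear_combination -h/2
  have h4 : (4:ℂ) ≠ 0 := by norm_num
  have hden : η^2 - 4*lam^2 ≠ 0 := by
    intro h
    rcases mul_eq_zero.mp (show (η - 2*lam) * (η + 2*lam) = 0 by linear_combination h) with h' | h'
    · exact h1 (by linear_combination -h'/2)
    · exact h2 (by linear_combination h'/2)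
  constructor <;>
  · simp only [detqKp, detqKm, detqUp, detqUm, detqM, Afun]
    rw [hA, hB, hB', hC, hD, hD']
    set PA := ∏ n, (lam - ξ n + η) with hPA
    set PB := ∏ n, (lam - ξ n - η) with hPB
    set PC := ∏ n, (-lam - ξ n + η) with hPC
    set PD := ∏ n, (-lam - ξ n - η) with hPD
    rw [div_eq_iff hden]
    have e1 : lam * 2 + η ≠ 0 := fun h => hd1 (by linear_combination h)
    have e2 : -(lam * 2) + η ≠ 0 := fun h => hd2 (by linear_combination h)
    have hDden : (lam * 2 + η) * (ζbp * ζbm) * ((-(lam * 2) + η) * (2 * 2 * (ζbp * ζbm))) ≠ 0 :=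
      mul_ne_zero (mul_ne_zero e1 (mul_ne_zero hζbp hζbm))
        (mul_ne_zero e2 (mul_ne_zero (by norm_num) (mul_ne_zero hζbp hζbm)))
    have hbig1 : (-(lam^2*ζbp^2*ζbm^2*16) + η^2*ζbp^2*ζbm^2*4) ≠ 0 := by
      have := mul_ne_zero (mul_ne_zero (mul_ne_zero hden (pow_ne_zero 2 hζbp)) (pow_ne_zero 2 hζbm)) h4
      intro h; exact this (by linear_combination h)
    have hbig2 : (-(lam^2*ζbm^2*ζbp^2*16) + η^2*ζbm^2*ζbp^2*4) ≠ 0 := by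
      have := mul_ne_zero (mul_ne_zero (mul_ne_zero hden (pow_ne_zero 2 hζbm)) (pow_ne_zero 2 hζbp)) h4
      intro h; exact this (by linear_combination h)
    rcases Nat.even_or_odd N with he | he
    · rw [he.neg_one_pow]
      field_simp [hbig1, hbig2]
      rw [eq_div_iff (fun h => e2 (by linear_combination h))]
      ring
    · rw [he.neg_one_pow]
      field_simp [hbig1, hbig2]
      rw [eq_div_iff (fun h => e2 (by linear_combination h))]
      ring
end XXXChain
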